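/- Fix p ∈ [n]. Define the auxiliary graph H on the cycles of the shift cycle factor of S(n,k), with an edge between C(x) and C(y) for every connector (x,y) ∈ U_p with C(x) ≠ C(y). Then H is connected. -/

import Mathlib

/-- Cyclic right shift of a bitstring of length `n` by one position: `σ(x)_i = x_{i-1}`. -/
def shift {n : ℕ} (x : ZMod n → Bool) : ZMod n → Bool := fun i => x (i - 1)

/-- Cyclic left shift, i.e. `σ⁻¹`: `σ⁻¹(x)_i = x_{i+1}`. -/
def unshift {n : ℕ} (x : ZMod n → Bool) : ZMod n → Bool := fun i => x (i + 1)

/-- A vertex of the Schrijver graph `S(n,k)` in bitstring form: a binary string of length `n`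
with exactly `k` ones and no two ones cyclically adjacent. -/
def IsSchrijverVertex (n k : ℕ) (x : ZMod n → Bool) : Prop :=
  Set.ncard {i : ZMod n | x i = true} = k ∧ ∀ i : ZMod n, x i = true → x (i + 1) = false

/-- Adjacency in the (Schrijver/Kneser) graph: the sets of 1-positions are disjoint
(and the strings are distinct). -/
def SAdj {n : ℕ} (x y : ZMod n → Bool) : Prop :=
  x ≠ y ∧ ∀ i : ZMod n, ¬(x i = true ∧ y i = true)

/-- The necklace of `x`: the set of all cyclic shifts of `x`. -/
def neck {n : ℕ} (x : ZMod n → Bool) : Set (ZMod n → Bool) :=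
  {y | ∃ i : ℕ, shift^[i] x = y}

/-- `(x, y)` is a connector with the glider push at position `i`: `x` and `σ⁻¹(y)` agree
outside the three cyclically consecutive positions `i, i+1, i+2`, where `x` reads `1,0,–`
(with `i+2` unmatched in `x`) and `σ⁻¹(y)` reads `–,1,0` (with `i` unmatched in `σ⁻¹(y)`). -/
def ConnAt {n : ℕ} (i : ZMod n) (x y : ZMod n → Bool) : Prop :=
  x i = true ∧ x (i + 1) = false ∧ x (i + 2) = false ∧
  unshift y i = false ∧ unshift y (i - 1) = false ∧
  unshift y (i + 1) = true ∧ unshift y (i + 2) = false ∧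
  ∀ j : ZMod n, j ≠ i → j ≠ i + 1 → j ≠ i + 2 → x j = unshift y j

/-- `(x,y)` is a connector (at some position). -/
def Conn {n : ℕ} (x y : ZMod n → Bool) : Prop := ∃ i : ZMod n, ConnAt i x y

/-- Nodes of the auxiliary graph: the cycles of the shift cycle factor of `S(n,k)`,
identified with the necklaces of vertices. -/
def Node (n k : ℕ) : Type := {S : Set (ZMod n → Bool) // ∃ x, IsSchrijverVertex n k x ∧ S = neck x}

/-- The auxiliary graph on the cycles of the factor, with an edge between two distinct
cycles whenever some pair related by `P` has its two members on the two cycles. -/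
def auxGraph (n k : ℕ) (P : (ZMod n → Bool) → (ZMod n → Bool) → Prop) :
    SimpleGraph (Node n k) where
  Adj A B := A ≠ B ∧ ∃ x y, P x y ∧ ((x ∈ A.1 ∧ y ∈ B.1) ∨ (x ∈ B.1 ∧ y ∈ A.1))
  symm := by
    constructor
    rintro A B ⟨hne, x, y, hxy, h⟩
    exact ⟨hne.symm, x, y, hxy, h.symm⟩
  loopless := by constructor; rintro A ⟨hne, -⟩; exact hne rfl

namespace SchrAux

variable {n k : ℕ}

lemma bool_ext {a b : Bool} (h : (a = true) ↔ (b = true)) : a = b := by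
  cases a <;> cases b <;> simp_all

lemma shift_iterate (x : ZMod n → Bool) (j : ℕ) (i : ZMod n) :
    shift^[j] x i = x (i - (j : ZMod n)) := by
  induction j generalizing i with
  | zero => simp
  | succ j ih =>
    rw [Function.iterate_succ_apply']
    show (shift^[j] x) (i - 1) = _
    rw [ih]
    congr 1
    push_cast
    ring

lemma shift_n_id (hn : 0 < n) : (shift^[n] : (ZMod n → Bool) → (ZMod n → Bool)) = id := by
  funext x i
  rw [shift_iterate]
  simp [ZMod.natCast_self]

lemma neck_iterate (hn : 0 < n) (x : ZMod n → Bool) (m : ℕ) :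
    neck (shift^[m] x) = neck x := by
  ext z
  constructor
  · rintro ⟨a, rfl⟩
    exact ⟨a + m, (Function.iterate_add_apply _ a m x)⟩
  · rintro ⟨a, rfl⟩
    refine ⟨a + (n - 1) * m, ?_⟩
    rw [← Function.iterate_add_apply]
    have hm : (n - 1) * m + m = n * m := by
      cases n with
      | zero => omega
      | succ t => simp [Nat.succ_sub_one]; ring
    have : a + (n - 1) * m + m = a + n * m := by omega
    rw [this, Function.iterate_add_apply, Function.iterate_mul, shift_n_id hn,
      Function.iterate_id, id]

lemma neck_eq_of_mem (hn : 0 < n) {x y : ZMod n → Bool} (h : y ∈ neck x) :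
    neck y = neck x := by
  obtain ⟨m, rfl⟩ := h
  exact neck_iterate hn x m

/-- rotation by an arbitrary `ZMod n` amount -/
def rot (m : ZMod n) (x : ZMod n → Bool) : ZMod n → Bool := fun i => x (i - m)

lemma rot_eq_iterate [NeZero n] (m : ZMod n) (x : ZMod n → Bool) :
    rot m x = shift^[m.val] x := by
  funext i
  rw [shift_iterate, ZMod.natCast_zmod_val]
  rfl

lemma rot_mem_neck [NeZero n] (m : ZMod n) (x : ZMod n → Bool) : rot m x ∈ neck x :=
  ⟨m.val, (rot_eq_iterate m x).symm⟩

lemma sch_pred {x : ZMod n → Bool} (hx : IsSchrijverVertex n k x) {i : ZMod n}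
    (h : x i = true) : x (i - 1) = false := by
  by_contra hc
  have h1 : x (i - 1) = true := by
    cases hv : x (i - 1)
    · exact absurd hv hc
    · rfl
  have := hx.2 _ h1
  rw [sub_add_cancel] at this
  rw [h] at this
  exact Bool.noConfusion this

lemma sch_rot [NeZero n] {x : ZMod n → Bool} (hx : IsSchrijverVertex n k x) (m : ZMod n) :
    IsSchrijverVertex n k (rot m x) := by
  constructor
  · have himg : {i : ZMod n | rot m x i = true} = (fun a => a + m) '' {i | x i = true} := by
      ext i
      simp only [Set.mem_setOf_eq, Set.mem_image]
      constructor
      · intro h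
        exact ⟨i - m, h, by ring⟩
      · rintro ⟨a, ha, rfl⟩
        show x (a + m - m) = true
        rwa [add_sub_cancel_right]
    rw [himg, Set.ncard_image_of_injective _ (add_left_injective m)]
    exact hx.1
  · intro i h
    have h2 : x ((i - m) + 1) = false := hx.2 (i - m) h
    show x (i + 1 - m) = false
    rw [show i + 1 - m = (i - m) + 1 by ring]
    exact h2

lemma natCast_ne_zero' {a : ℕ} (h0 : 0 < a) (hlt : a < n) : ((a : ℕ) : ZMod n) ≠ 0 := by
  intro h
  rw [ZMod.natCast_eq_zero_iff] at h
  have := Nat.le_of_dvd h0 h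
  omega

lemma one_ne_zero' (h3 : 3 ≤ n) : (1 : ZMod n) ≠ 0 := by
  have := natCast_ne_zero' (n := n) (a := 1) (by omega) (by omega)
  simpa using this

lemma two_ne_zero' (h3 : 3 ≤ n) : (2 : ZMod n) ≠ 0 := by
  have := natCast_ne_zero' (n := n) (a := 2) (by omega) (by omega)
  simpa using this

lemma add_right_ne {a c : ZMod n} (hc : c ≠ 0) : a + c ≠ a := by
  intro h
  exact hc (add_eq_left.mp h)

/-- the elementary move: the one at `u` steps forward to `u+1`. -/
def mv (x : ZMod n → Bool) (u : ZMod n) : ZMod n → Bool :=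
  fun i => if i = u + 1 then true else if i = u then false else x i

lemma mv_schrijver (h3 : 3 ≤ n) {x : ZMod n → Bool} (hx : IsSchrijverVertex n k x)
    {u : ZMod n} (hu : x u = true) (h2 : x (u + 2) = false) :
    IsSchrijverVertex n k (mv x u) := by
  haveI : NeZero n := ⟨by omega⟩
  have hone := one_ne_zero' h3
  have htwo := two_ne_zero' h3
  have hu1 : x (u + 1) = false := hx.2 u hu
  have hne10 : u + 1 ≠ u := add_right_ne hone
  constructor
  · have hS : {i : ZMod n | mv x u i = true} = insert (u + 1) ({i | x i = true} \ {u}) := by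
      ext i
      simp only [mv, Set.mem_insert_iff, Set.mem_diff, Set.mem_setOf_eq,
        Set.mem_singleton_iff]
      by_cases h1 : i = u + 1
      · simp [h1]
      · by_cases h0 : i = u
        · subst h0
          simp [h1, hne10.symm]
        · simp [h1, h0]
    rw [hS, Set.ncard_insert_of_notMem (by simp [hu1]) (Set.toFinite _)]
    have hmem : u ∈ {i : ZMod n | x i = true} := hu
    have hd := Set.ncard_diff_singleton_add_one hmem (Set.toFinite _)
    rw [hx.1] at hd
    omega
  · intro i hi
    by_cases hiu1 : i = u + 1
    · subst hiu1
      have e1 : u + 1 + 1 ≠ u + 1 := add_right_ne hone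
      have e2 : u + 1 + 1 ≠ u := by
        rw [show u + 1 + 1 = u + 2 by ring]
        exact add_right_ne htwo
      show mv x u (u + 1 + 1) = false
      rw [mv]
      simp only [if_neg e1, if_neg e2]
      rw [show u + 1 + 1 = u + 2 by ring]
      exact h2
    · by_cases hiu : i = u
      · exfalso
        rw [hiu] at hi
        have : mv x u u = false := by
          simp [mv, hne10.symm]
        rw [this] at hi
        exact Bool.noConfusion hi
      · have hxi : x i = true := by
          rw [mv] at hi
          simpa only [if_neg hiu1, if_neg hiu] using hi
        by_cases h1 : i + 1 = u + 1
        · exact absurd (add_right_cancel h1) hiu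
        · by_cases h0 : i + 1 = u
          · show mv x u (i + 1) = false
            rw [mv]; simp only [if_neg h1, if_pos h0]
          · show mv x u (i + 1) = false
            rw [mv]; simp only [if_neg h1, if_neg h0]
            exact hx.2 i hxi

end SchrAux
namespace SchrAux

/-- the auxiliary graph of the theorem -/
abbrev theG (n k : ℕ) (p : ZMod n) : SimpleGraph (Node n k) :=
  auxGraph n k (fun x y =>
    IsSchrijverVertex n k x ∧ IsSchrijverVertex n k y ∧ ConnAt p x y)

def mkNode (n k : ℕ) (x : ZMod n → Bool) (hx : IsSchrijverVertex n k x) : Node n k :=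
  ⟨neck x, x, hx, rfl⟩

variable {n k : ℕ}

lemma rot_mv (m u : ZMod n) (x : ZMod n → Bool) :
    rot m (mv x u) = mv (rot m x) (u + m) := by
  funext i
  show mv x u (i - m) = mv (rot m x) (u + m) i
  rw [mv, mv]
  have e1 : (i - m = u + 1) ↔ (i = u + m + 1) := by
    rw [sub_eq_iff_eq_add]
    constructor <;> (intro h; rw [h]; ring)
  have e0 : (i - m = u) ↔ (i = u + m) := by
    rw [sub_eq_iff_eq_add]
  by_cases h1 : i - m = u + 1
  · rw [if_pos h1, if_pos (e1.mp h1)]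
  · rw [if_neg h1, if_neg (fun h => h1 (e1.mpr h))]
    by_cases h0 : i - m = u
    · rw [if_pos h0, if_pos (e0.mp h0)]
    · rw [if_neg h0, if_neg (fun h => h0 (e0.mpr h))]
      rfl

lemma step_reach (hk : 1 ≤ k) (hn : 2 * k + 1 ≤ n) (p : ZMod n)
    (x : ZMod n → Bool) (hx : IsSchrijverVertex n k x) (u : ZMod n)
    (hu : x u = true) (h2 : x (u + 2) = false)
    (hy : IsSchrijverVertex n k (mv x u)) :
    (theG n k p).Reachable (mkNode n k x hx) (mkNode n k (mv x u) hy) := by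
  haveI : NeZero n := ⟨by omega⟩
  have h3 : 3 ≤ n := by omega
  have hone := one_ne_zero' h3
  have htwo := two_ne_zero' h3
  set m := p - u with hm
  set x' := rot m x with hx'def
  have key : ∀ a : ZMod n, x' (p + a) = x (u + a) := by
    intro a
    show x (p + a - m) = x (u + a)
    congr 1
    rw [hm]; ring
  have keyp : x' p = x u := by
    have := key 0; simpa using this
  have keym : x' (p - 1) = x (u - 1) := by
    show x (p - 1 - m) = x (u - 1)
    congr 1
    rw [hm]; ring
  set z := mv x' p with hzdef
  have hz_rot : z = rot m (mv x u) := by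
    rw [rot_mv]
    rw [hzdef, hx'def]
    congr 1
    rw [hm]; ring
  set y := shift z with hydef
  have hx'sch : IsSchrijverVertex n k x' := sch_rot hx m
  have hzsch : IsSchrijverVertex n k z := by
    apply mv_schrijver h3 hx'sch
    · rw [keyp]; exact hu
    · rw [key 2]; exact h2
  have hysch : IsSchrijverVertex n k y := by
    have : y = rot (1 : ZMod n) z := rfl
    rw [this]
    exact sch_rot hzsch 1
  have hunshift : ∀ j : ZMod n, unshift y j = z j := by
    intro j
    show z (j + 1 - 1) = z j
    rw [add_sub_cancel_right]
  -- the various ≠ facts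
  have ne1 : p + 1 ≠ p := add_right_ne hone
  have ne2 : p + 2 ≠ p := add_right_ne htwo
  have ne21 : p + 2 ≠ p + 1 := by
    rw [show p + 2 = p + 1 + 1 by ring]
    exact add_right_ne hone
  have nem0 : p - 1 ≠ p := by
    intro h
    apply hone
    have : p - 1 + 1 = p + 1 := by rw [h]
    rw [sub_add_cancel] at this
    exact (add_eq_left.mp this.symm)
  have nem1 : p - 1 ≠ p + 1 := by
    intro h
    apply htwo
    have : p - 1 + 1 = p + 1 + 1 := by rw [h]
    rw [sub_add_cancel, show p + 1 + 1 = p + 2 by ring] at this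
    exact add_eq_left.mp this.symm
  have hconn : ConnAt p x' y := by
    refine ⟨?_, ?_, ?_, ?_, ?_, ?_, ?_, ?_⟩
    · rw [keyp]; exact hu
    · rw [key 1]; exact hx.2 u hu
    · rw [key 2]; exact h2
    · rw [hunshift]
      show mv x' p p = false
      simp [mv, ne1.symm]
    · rw [hunshift]
      show mv x' p (p - 1) = false
      rw [mv]; simp only [if_neg nem1, if_neg nem0]
      rw [keym]
      exact sch_pred hx hu
    · rw [hunshift]
      show mv x' p (p + 1) = true
      simp [mv]
    · rw [hunshift]
      show mv x' p (p + 2) = false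
      rw [mv]; simp only [if_neg ne21, if_neg ne2]
      rw [key 2]; exact h2
    · intro j hj0 hj1 _
      rw [hunshift]
      show x' j = mv x' p j
      rw [mv]; simp only [if_neg hj1, if_neg hj0]
  have hmemx' : x' ∈ neck x := by
    rw [hx'def]; exact rot_mem_neck m x
  have hmemy : y ∈ neck (mv x u) := by
    have h1 : z ∈ neck (mv x u) := by
      rw [hz_rot]; exact rot_mem_neck m (mv x u)
    have h2' : neck z = neck (mv x u) := neck_eq_of_mem (by omega) h1
    rw [← h2']
    exact ⟨1, rfl⟩
  by_cases hEq : mkNode n k x hx = mkNode n k (mv x u) hy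
  · rw [hEq]
  · apply SimpleGraph.Adj.reachable
    exact ⟨hEq, x', y, ⟨hx'sch, hysch, hconn⟩, Or.inl ⟨hmemx', hmemy⟩⟩

end SchrAux
namespace SchrAux

variable {n k : ℕ}

/-- move the one at `u` forward by `d` steps. -/
def slidemv (x : ZMod n → Bool) (u : ZMod n) (d : ℕ) : ZMod n → Bool :=
  fun i => if i = u + (d : ZMod n) then true else if i = u then false else x i

lemma slide_reach (hk : 1 ≤ k) (hn : 2 * k + 1 ≤ n) (p : ZMod n) :
    ∀ d : ℕ, d + 2 ≤ n → ∀ x : ZMod n → Bool, ∀ hx : IsSchrijverVertex n k x,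
    ∀ u : ZMod n, x u = true →
    (∀ j : ℕ, 1 ≤ j → j ≤ d + 1 → x (u + (j : ZMod n)) = false) →
    ∃ hy : IsSchrijverVertex n k (slidemv x u d),
      (theG n k p).Reachable (mkNode n k x hx) (mkNode n k (slidemv x u d) hy) := by
  have h3 : 3 ≤ n := by omega
  haveI : NeZero n := ⟨by omega⟩
  have hone := one_ne_zero' h3
  intro d
  induction d with
  | zero =>
    intro _ x hx u hu _
    have hxx : slidemv x u 0 = x := by
      funext i
      show (if i = u + ((0 : ℕ) : ZMod n) then true else if i = u then false else x i) = x i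
      simp only [Nat.cast_zero, add_zero]
      by_cases h : i = u
      · rw [if_pos h, h, hu]
      · rw [if_neg h, if_neg h]
    refine ⟨by rw [hxx]; exact hx, ?_⟩
    have : mkNode n k x hx = mkNode n k (slidemv x u 0) (by rw [hxx]; exact hx) :=
      Subtype.ext (by show neck x = neck (slidemv x u 0); rw [hxx])
    rw [← this]
  | succ d ih =>
    intro hb x hx u hu hcells
    have hu1 : x (u + 1) = false := hx.2 u hu
    have hu2 : x (u + 2) = false := by
      have h := hcells 2 (by omega) (by omega)
      rwa [show ((2 : ℕ) : ZMod n) = 2 by push_cast; ring] at h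
    have hx₁ : IsSchrijverVertex n k (mv x u) := mv_schrijver h3 hx hu hu2
    have r1 : (theG n k p).Reachable (mkNode n k x hx) (mkNode n k (mv x u) hx₁) :=
      step_reach hk hn p x hx u hu hu2 hx₁
    have hx₁u : mv x u (u + 1) = true := by simp [mv]
    have hcells₁ : ∀ j : ℕ, 1 ≤ j → j ≤ d + 1 → mv x u (u + 1 + (j : ZMod n)) = false := by
      intro j hj1 hj2
      by_cases hcase : u + 1 + (j : ZMod n) = u
      · rw [hcase]
        show (if u = u + 1 then true else if u = u then false else x u) = false
        rw [if_neg (add_right_ne hone).symm, if_pos rfl]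
      · have hne1 : u + 1 + (j : ZMod n) ≠ u + 1 := by
          intro h
          have hj0 : ((j : ℕ) : ZMod n) = 0 := add_eq_left.mp h
          exact natCast_ne_zero' (by omega) (by omega) hj0
        show (if u + 1 + (j : ZMod n) = u + 1 then true
          else if u + 1 + (j : ZMod n) = u then false else x (u + 1 + (j : ZMod n))) = false
        rw [if_neg hne1, if_neg hcase]
        rw [show u + 1 + ((j : ℕ) : ZMod n) = u + (((j + 1 : ℕ)) : ZMod n) by push_cast; ring]
        exact hcells (j + 1) (by omega) (by omega)
    obtain ⟨hsch', hreach'⟩ := ih (by omega) (mv x u) hx₁ (u + 1) hx₁u hcells₁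
    have heq : slidemv (mv x u) (u + 1) d = slidemv x u (d + 1) := by
      funext i
      have hw : u + 1 + ((d : ℕ) : ZMod n) = u + (((d + 1 : ℕ)) : ZMod n) := by
        push_cast; ring
      show (if i = u + 1 + (d : ZMod n) then true else if i = u + 1 then false else mv x u i)
        = (if i = u + ((d + 1 : ℕ) : ZMod n) then true else if i = u then false else x i)
      by_cases hA : i = u + ((d + 1 : ℕ) : ZMod n)
      · rw [if_pos hA, if_pos (by rw [hA, hw])]
      · rw [if_neg hA, if_neg (fun h => hA (by rw [h, hw]))]
        by_cases hB : i = u + 1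
        · rw [if_pos hB]
          have hBu : i ≠ u := by rw [hB]; exact add_right_ne hone
          rw [if_neg hBu, hB]
          have := hcells 1 (by omega) (by omega)
          rw [show ((1 : ℕ) : ZMod n) = 1 by push_cast; ring] at this
          rw [this]
        · rw [if_neg hB]
          by_cases hC : i = u
          · rw [if_pos hC]
            show (if i = u + 1 then true else if i = u then false else x i) = false
            rw [if_neg hB, if_pos hC]
          · rw [if_neg hC]
            show (if i = u + 1 then true else if i = u then false else x i) = x i
            rw [if_neg hB, if_neg hC]
    refine ⟨by rw [← heq]; exact hsch', ?_⟩
    refine r1.trans ?_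
    have hnodeeq : mkNode n k (slidemv (mv x u) (u + 1) d) hsch'
        = mkNode n k (slidemv x u (d + 1)) (by rw [← heq]; exact hsch') :=
      Subtype.ext (by show neck _ = neck _; rw [heq])
    rw [← hnodeeq]
    exact hreach'

end SchrAux
namespace SchrAux

variable {n k : ℕ}

lemma blocks (hk : 1 ≤ k) (hn : 2 * k + 1 ≤ n) (p : ZMod n) :
    ∀ m : ℕ, 1 ≤ m → m ≤ k → ∀ x : ZMod n → Bool, ∀ hx : IsSchrijverVertex n k x,
    ∃ y : ZMod n → Bool, ∃ hy : IsSchrijverVertex n k y, ∃ q : ZMod n,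
      (theG n k p).Reachable (mkNode n k x hx) (mkNode n k y hy) ∧
      ∀ i : ℕ, i < m → y (q + ((2 * i : ℕ) : ZMod n)) = true := by
  haveI : NeZero n := ⟨by omega⟩
  intro m
  induction m with
  | zero => intro h; omega
  | succ m ih =>
    intro _ hmk x hx
    by_cases hm0 : m = 0
    · subst hm0
      have hne : {i : ZMod n | x i = true}.Nonempty :=
        Set.nonempty_of_ncard_ne_zero (by rw [hx.1]; omega)
      obtain ⟨q, hq⟩ := hne
      refine ⟨x, hx, q, SimpleGraph.Reachable.refl _, ?_⟩
      intro i hi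
      have : i = 0 := by omega
      subst this
      simpa using hq
    · have h1m : 1 ≤ m := by omega
      obtain ⟨y, hy, q, hre, hblock⟩ := ih h1m (by omega) x hx
      -- find a one outside the block
      have hw : ∃ w, y w = true ∧ ∀ j : ℕ, j < m → w ≠ q + ((2 * j : ℕ) : ZMod n) := by
        by_contra hcon
        push_neg at hcon
        have hsub : {i : ZMod n | y i = true} ⊆
            ↑(Finset.image (fun j : ℕ => q + ((2 * j : ℕ) : ZMod n)) (Finset.range m)) := by
          intro w hwS
          obtain ⟨j, hj, hje⟩ := hcon w hwS
          simp only [Finset.coe_image, Finset.coe_range, Set.mem_image, Set.mem_Iio]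
          exact ⟨j, hj, hje.symm⟩
        have hle := Set.ncard_le_ncard hsub (Set.toFinite _)
        rw [hy.1, Set.ncard_coe_finset] at hle
        have hile := Finset.card_image_le
          (s := Finset.range m) (f := fun j : ℕ => q + ((2 * j : ℕ) : ZMod n))
        rw [Finset.card_range] at hile
        omega
      obtain ⟨w, hwone, hwnB⟩ := hw
      have hq0 : y q = true := by
        have := hblock 0 h1m
        simpa using this
      have hwq : w ≠ q := by
        intro h
        exact hwnB 0 (by omega) (by rw [h]; simp)
      set j₀ := (q - w).val with hj₀
      have hsub0 : q - w ≠ 0 := by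
        intro h
        rw [sub_eq_zero] at h
        exact hwq h.symm
      have hj₀pos : 0 < j₀ := by
        rw [hj₀]
        by_contra h
        push_neg at h
        have : (q - w).val = 0 := by omega
        exact hsub0 ((ZMod.val_eq_zero _).mp this)
      have hyj₀ : y (q - ((j₀ : ℕ) : ZMod n)) = true := by
        rw [hj₀, ZMod.natCast_zmod_val, sub_sub_cancel]
        exact hwone
      -- bound: the gap backwards from q to w is at most n - 2m
      have hsval : 2 * m ≤ (w - q).val := by
        by_contra hcon
        push_neg at hcon
        set s := (w - q).val with hsdef
        have hwqs : w = q + ((s : ℕ) : ZMod n) := by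
          rw [hsdef, ZMod.natCast_zmod_val]; ring
        rcases Nat.even_or_odd s with ⟨t, hts⟩ | ⟨t, hts⟩
        · apply hwnB t (by omega)
          rw [hwqs, show s = 2 * t from by omega]
        · have hblk : y (q + ((2 * t : ℕ) : ZMod n)) = true := hblock t (by omega)
          have hfalse := hy.2 _ hblk
          rw [hwqs] at hwone
          rw [show q + ((s : ℕ) : ZMod n) = q + ((2 * t : ℕ) : ZMod n) + 1 from by
            rw [show s = 2 * t + 1 from by omega]; push_cast; ring] at hwone
          rw [hfalse] at hwone
          exact Bool.noConfusion hwone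
      have hj₀bound : j₀ ≤ n - 2 * m := by
        have hneg : q - w = -(w - q) := by ring
        have hwq0 : w - q ≠ 0 := by
          intro h
          rw [sub_eq_zero] at h
          exact hwq h
        have hv := ZMod.neg_val (w - q)
        rw [if_neg hwq0] at hv
        have hlt := ZMod.val_lt (w - q)
        rw [hj₀, hneg, hv]
        omega
      -- minimal backward gap
      have hPex : ∃ j : ℕ, 1 ≤ j ∧ y (q - ((j : ℕ) : ZMod n)) = true := ⟨j₀, hj₀pos, hyj₀⟩
      set h := Nat.find hPex with hhdef
      obtain ⟨hh1, hhy⟩ := Nat.find_spec hPex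
      rw [← hhdef] at hh1 hhy
      have hhmin : ∀ j : ℕ, 1 ≤ j → j < h → y (q - ((j : ℕ) : ZMod n)) = false := by
        intro j hj1 hjh
        cases hval : y (q - ((j : ℕ) : ZMod n)) with
        | false => rfl
        | true => exact absurd ⟨hj1, hval⟩ (Nat.find_min hPex hjh)
      have hhj₀ : h ≤ j₀ := Nat.find_min' hPex ⟨hj₀pos, hyj₀⟩
      have hh2 : 2 ≤ h := by
        rcases Nat.lt_or_ge h 2 with hlt | hge
        · exfalso
          have hpred := sch_pred hy hq0
          have hh1' : h = 1 := by omega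
          rw [hh1', Nat.cast_one] at hhy
          rw [hpred] at hhy
          exact Bool.noConfusion hhy
        · exact hge
      set u := q - ((h : ℕ) : ZMod n) with hudef
      have hyu : y u = true := hhy
      have hcells : ∀ j : ℕ, 1 ≤ j → j ≤ (h - 2) + 1 → y (u + (j : ZMod n)) = false := by
        intro j hj1 hj2
        have he : u + ((j : ℕ) : ZMod n) = q - (((h - j : ℕ)) : ZMod n) := by
          rw [hudef]
          push_cast [Nat.cast_sub (by omega : j ≤ h)]
          ring
        rw [he]
        exact hhmin (h - j) (by omega) (by omega)
      have hd2 : (h - 2) + 2 ≤ n := by omega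
      obtain ⟨hy'sch, hreach2⟩ := slide_reach hk hn p (h - 2) hd2 y hy u hyu hcells
      refine ⟨slidemv y u (h - 2), hy'sch, q - 2, hre.trans hreach2, ?_⟩
      intro i hi
      have hud : u + (((h - 2 : ℕ)) : ZMod n) = q - 2 := by
        rw [hudef]
        push_cast [Nat.cast_sub (by omega : 2 ≤ h)]
        ring
      rcases Nat.eq_zero_or_pos i with hi0 | hipos
      · subst hi0
        simp only [Nat.mul_zero, Nat.cast_zero, add_zero]
        show (if q - 2 = u + ((h - 2 : ℕ) : ZMod n) then true
          else if q - 2 = u then false else y (q - 2)) = true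
        rw [if_pos hud.symm]
      · have hposition : q - 2 + ((2 * i : ℕ) : ZMod n) = q + ((2 * (i - 1) : ℕ) : ZMod n) := by
          rw [show 2 * i = 2 * (i - 1) + 2 from by omega]
          push_cast
          ring
        rw [hposition]
        have hbA : q + ((2 * (i - 1) : ℕ) : ZMod n) ≠ u + (((h - 2 : ℕ)) : ZMod n) := by
          rw [hud]
          intro hcon
          have h' : ((2 * (i - 1) : ℕ) : ZMod n) = -2 := by
            have := hcon
            rw [sub_eq_add_neg] at this
            exact add_left_cancel this
          have hz : (((2 * (i - 1) + 2 : ℕ)) : ZMod n) = 0 := by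
            rw [Nat.cast_add, h']
            push_cast
            ring
          rw [ZMod.natCast_eq_zero_iff] at hz
          have := Nat.le_of_dvd (by omega) hz
          omega
        have hbB : q + ((2 * (i - 1) : ℕ) : ZMod n) ≠ u := by
          rw [hudef]
          intro hcon
          have h' : ((2 * (i - 1) : ℕ) : ZMod n) = -((h : ℕ) : ZMod n) := by
            rw [sub_eq_add_neg] at hcon
            exact add_left_cancel hcon
          have hz : (((2 * (i - 1) + h : ℕ)) : ZMod n) = 0 := by
            rw [Nat.cast_add, h']
            ring
          rw [ZMod.natCast_eq_zero_iff] at hz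
          have := Nat.le_of_dvd (by omega) hz
          omega
        show (if q + ((2 * (i - 1) : ℕ) : ZMod n) = u + ((h - 2 : ℕ) : ZMod n) then true
          else if q + ((2 * (i - 1) : ℕ) : ZMod n) = u then false
          else y (q + ((2 * (i - 1) : ℕ) : ZMod n))) = true
        rw [if_neg hbA, if_neg hbB]
        exact hblock (i - 1) (by omega)

end SchrAux
namespace SchrAux

variable {n k : ℕ}

lemma exists_schrijver (hk : 1 ≤ k) (hn : 2 * k + 1 ≤ n) :
    ∃ c : ZMod n → Bool, IsSchrijverVertex n k c := by
  haveI : NeZero n := ⟨by omega⟩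
  refine ⟨fun i => decide (i.val < 2 * k ∧ i.val % 2 = 0), ?_, ?_⟩
  · have hset : {i : ZMod n | (decide (i.val < 2 * k ∧ i.val % 2 = 0)) = true}
        = ↑(Finset.image (fun j : ℕ => ((2 * j : ℕ) : ZMod n)) (Finset.range k)) := by
      ext i
      simp only [Set.mem_setOf_eq, decide_eq_true_eq, Finset.coe_image, Finset.coe_range,
        Set.mem_image, Set.mem_Iio]
      constructor
      · rintro ⟨h1, h2⟩
        refine ⟨i.val / 2, by omega, ?_⟩
        rw [show 2 * (i.val / 2) = i.val from by omega, ZMod.natCast_zmod_val]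
      · rintro ⟨j, hj, rfl⟩
        rw [ZMod.val_cast_of_lt (by omega)]
        omega
    rw [hset, Set.ncard_coe_finset, Finset.card_image_of_injOn, Finset.card_range]
    intro a ha b hb hab
    simp only [Finset.coe_range, Set.mem_Iio] at ha hb
    have := congrArg ZMod.val hab
    rw [ZMod.val_cast_of_lt (by omega), ZMod.val_cast_of_lt (by omega)] at this
    omega
  · intro i hi
    simp only [decide_eq_true_eq] at hi
    obtain ⟨h1, h2⟩ := hi
    have hval : (i + 1).val = i.val + 1 := by
      have he : i + 1 = ((i.val + 1 : ℕ) : ZMod n) := by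
        rw [Nat.cast_add, Nat.cast_one, ZMod.natCast_zmod_val]
      rw [he, ZMod.val_cast_of_lt (by omega)]
    rw [decide_eq_false_iff_not]
    rw [hval]
    omega

lemma ones_char (hk : 1 ≤ k) (hn : 2 * k + 1 ≤ n)
    (y : ZMod n → Bool) (hy : IsSchrijverVertex n k y) (q : ZMod n)
    (hb : ∀ i : ℕ, i < k → y (q + ((2 * i : ℕ) : ZMod n)) = true) :
    ∀ i : ZMod n, y i = true ↔ ∃ j : ℕ, j < k ∧ i = q + ((2 * j : ℕ) : ZMod n) := by
  haveI : NeZero n := ⟨by omega⟩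
  intro i
  have hsub : ↑(Finset.image (fun j : ℕ => q + ((2 * j : ℕ) : ZMod n)) (Finset.range k))
      ⊆ {i : ZMod n | y i = true} := by
    intro a ha
    simp only [Finset.coe_image, Finset.coe_range, Set.mem_image, Set.mem_Iio] at ha
    obtain ⟨j, hj, rfl⟩ := ha
    exact hb j hj
  have hcard : (Finset.image (fun j : ℕ => q + ((2 * j : ℕ) : ZMod n)) (Finset.range k)).card
      = k := by
    rw [Finset.card_image_of_injOn, Finset.card_range]
    intro a ha b hb' hab
    simp only [Finset.coe_range, Set.mem_Iio] at ha hb'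
    have hc : ((2 * a : ℕ) : ZMod n) = ((2 * b : ℕ) : ZMod n) := add_left_cancel hab
    have := congrArg ZMod.val hc
    rw [ZMod.val_cast_of_lt (by omega), ZMod.val_cast_of_lt (by omega)] at this
    omega
  have heq : {i : ZMod n | y i = true}
      = ↑(Finset.image (fun j : ℕ => q + ((2 * j : ℕ) : ZMod n)) (Finset.range k)) :=
    (Set.eq_of_subset_of_ncard_le hsub
      (by rw [hy.1, Set.ncard_coe_finset, hcard]) (Set.toFinite _)).symm
  constructor
  · intro h
    have hmem : i ∈ {i : ZMod n | y i = true} := h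
    rw [heq] at hmem
    simp only [Finset.coe_image, Finset.coe_range, Set.mem_image, Set.mem_Iio] at hmem
    obtain ⟨j, hj, hje⟩ := hmem
    exact ⟨j, hj, hje.symm⟩
  · rintro ⟨j, hj, rfl⟩
    exact hb j hj

end SchrAux

open SchrAux

/-- the auxiliary graph `H[U_p]` on the cycles of the shift cycle factor of
`S(n,k)`, with an edge between `C(x)` and `C(y)` for every connector `(x,y) ∈ U_p` lying on
distinct cycles, is connected. -/
theorem aux_graph_connected (n k : ℕ) (hk : 1 ≤ k) (hn : 2 * k + 1 ≤ n) (p : ZMod n) :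
    (auxGraph n k (fun x y =>
        IsSchrijverVertex n k x ∧ IsSchrijverVertex n k y ∧ ConnAt p x y)).Connected := by
  haveI : NeZero n := ⟨by omega⟩
  obtain ⟨c, hc⟩ := exists_schrijver (n := n) hk hn
  haveI : Nonempty (Node n k) := ⟨mkNode n k c hc⟩
  show (theG n k p).Connected
  refine ⟨?_⟩
  intro A B
  obtain ⟨x₁, hx₁, hA⟩ := A.2
  obtain ⟨x₂, hx₂, hB⟩ := B.2
  have hA' : A = mkNode n k x₁ hx₁ := Subtype.ext hA
  have hB' : B = mkNode n k x₂ hx₂ := Subtype.ext hB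
  obtain ⟨y₁, hy₁, q₁, hr₁, hb₁⟩ := blocks hk hn p k hk le_rfl x₁ hx₁
  obtain ⟨y₂, hy₂, q₂, hr₂, hb₂⟩ := blocks hk hn p k hk le_rfl x₂ hx₂
  have hrot : y₂ = rot (q₂ - q₁) y₁ := by
    funext i
    apply bool_ext
    rw [ones_char hk hn y₂ hy₂ q₂ hb₂ i]
    show _ ↔ y₁ (i - (q₂ - q₁)) = true
    rw [ones_char hk hn y₁ hy₁ q₁ hb₁ (i - (q₂ - q₁))]
    constructor
    · rintro ⟨j, hj, rfl⟩
      exact ⟨j, hj, by ring⟩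
    · rintro ⟨j, hj, he⟩
      rw [sub_eq_iff_eq_add] at he
      exact ⟨j, hj, by rw [he]; ring⟩
  have hnodes : mkNode n k y₂ hy₂ = mkNode n k y₁ hy₁ := by
    apply Subtype.ext
    show neck y₂ = neck y₁
    rw [hrot]
    exact neck_eq_of_mem (by omega) (rot_mem_neck _ _)
  rw [hA', hB']
  refine hr₁.trans ?_
  rw [← hnodes]
  exact hr₂.symm
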